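/- Let f ∈ C([0,1],ℝ) have a unique maximum point, i.e. there exists ξ_f ∈ [0,1] such that f(ξ_f) = F(f) and f(ξ) < f(ξ_f) for every ξ ∈ [0,1] with ξ ≠ ξ_f. Then F is Gâteaux differentiable at f, and its Gâteaux derivative is g ↦ g(ξ_f): for every g ∈ C([0,1],ℝ), the difference quotient (F(f + t g) − F(f))/t converges to g(ξ_f) as t → 0 (t ≠ 0). -/
import Mathlib

lemma bdd_range_cm (h : C(Set.Icc (0 : ℝ) 1, ℝ)) :
    BddAbove (Set.range fun ξ => h ξ) := by
  refine ⟨‖h‖, ?_⟩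
  rintro _ ⟨ξ, rfl⟩
  exact (le_abs_self _).trans (h.norm_coe_le_norm ξ)

/-- If `f ∈ C([0,1],ℝ)` has a unique maximum point `ξf`, then the maximum functional
`F(f) = max f` is Gâteaux differentiable at `f` with derivative `g ↦ g(ξf)`: for every
`g`, the difference quotient `(F(f + t g) - F(f))/t` converges to `g(ξf)` as `t → 0`. -/
theorem max_functional_gateaux_differentiable
    (f : C(Set.Icc (0 : ℝ) 1, ℝ)) (ξf : Set.Icc (0 : ℝ) 1)
    (hmax : f ξf = ⨆ ξ, f ξ)
    (huniq : ∀ ξ : Set.Icc (0 : ℝ) 1, ξ ≠ ξf → f ξ < f ξf) :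
    ∀ g : C(Set.Icc (0 : ℝ) 1, ℝ),
      Filter.Tendsto
        (fun t : ℝ => ((⨆ ξ, (f + t • g) ξ) - ⨆ ξ, f ξ) / t)
        (nhdsWithin 0 {(0 : ℝ)}ᶜ) (nhds (g ξf)) := by
  intro g
  have hle : ∀ ξ, f ξ ≤ f ξf := by
    intro ξ
    rcases eq_or_ne ξ ξf with rfl | h
    · exact le_refl _
    · exact (huniq ξ h).le
  rw [Metric.tendsto_nhdsWithin_nhds]
  intro ε hε
  set V : Set (Set.Icc (0 : ℝ) 1) := {ξ | |g ξ - g ξf| < ε / 2} with hVdef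
  have hVo : IsOpen V := by
    have hc : Continuous fun ξ : Set.Icc (0 : ℝ) 1 => |g ξ - g ξf| :=
      (g.continuous.sub continuous_const).abs
    exact isOpen_lt hc continuous_const
  have hξV : ξf ∈ V := by simp [hVdef, half_pos hε]
  obtain ⟨δ₀, hδ₀, hK⟩ : ∃ δ₀ > 0, ∀ ξ, ξ ∉ V → f ξ + δ₀ ≤ f ξf := by
    rcases Set.eq_empty_or_nonempty Vᶜ with he | hne'
    · exact ⟨1, one_pos, fun ξ hξ => absurd (he ▸ hξ : ξ ∈ (∅ : Set _)) (Set.notMem_empty ξ)⟩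
    · obtain ⟨x, hxK, hx⟩ :=
        hVo.isClosed_compl.isCompact.exists_isMaxOn hne' f.continuous.continuousOn
      have hxne : x ≠ ξf := fun h => hxK (h ▸ hξV)
      refine ⟨f ξf - f x, sub_pos.mpr (huniq x hxne), fun ξ hξ => ?_⟩
      have : f ξ ≤ f x := hx hξ
      linarith
  refine ⟨δ₀ / (2 * (‖g‖ + 1)), by positivity, fun t ht htlt => ?_⟩
  have htne : t ≠ 0 := ht
  have htabs : |t| > 0 := abs_pos.mpr htne
  rw [Real.dist_eq, sub_zero] at htlt
  have key : ∀ ξ, f ξ + t * g ξ ≤ f ξf + t * g ξf + |t| * (ε / 2) := by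
    intro ξ
    by_cases hξ : ξ ∈ V
    · have h1 := hle ξ
      have h2 : t * g ξ - t * g ξf ≤ |t| * (ε / 2) := by
        calc t * g ξ - t * g ξf = t * (g ξ - g ξf) := by ring
          _ ≤ |t * (g ξ - g ξf)| := le_abs_self _
          _ = |t| * |g ξ - g ξf| := abs_mul _ _
          _ ≤ |t| * (ε / 2) := by
              exact mul_le_mul_of_nonneg_left hξ.le (abs_nonneg t)
      linarith
    · have h1 := hK ξ hξ
      have hg1 : t * g ξ ≤ |t| * ‖g‖ := by
        calc t * g ξ ≤ |t * g ξ| := le_abs_self _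
          _ = |t| * |g ξ| := abs_mul _ _
          _ ≤ |t| * ‖g‖ := by
              exact mul_le_mul_of_nonneg_left (g.norm_coe_le_norm ξ) (abs_nonneg t)
      have hg2 : -(|t| * ‖g‖) ≤ t * g ξf := by
        have : |t * g ξf| ≤ |t| * ‖g‖ := by
          rw [abs_mul]
          exact mul_le_mul_of_nonneg_left (g.norm_coe_le_norm ξf) (abs_nonneg t)
        linarith [neg_abs_le (t * g ξf)]
      have h3 : 2 * (|t| * ‖g‖) ≤ δ₀ := by
        have h4 : |t| * (2 * (‖g‖ + 1)) < δ₀ := by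
          rw [lt_div_iff₀ (by positivity)] at htlt
          exact htlt
        nlinarith [abs_nonneg t, norm_nonneg g]
      have h5 : 0 ≤ |t| * (ε / 2) := by positivity
      linarith
  have hM_up : (⨆ ξ, (f + t • g) ξ) ≤ f ξf + t * g ξf + |t| * (ε / 2) := by
    refine ciSup_le fun ξ => ?_
    simpa using key ξ
  have hM_lo : f ξf + t * g ξf ≤ ⨆ ξ, (f + t • g) ξ := by
    have := le_ciSup (bdd_range_cm (f + t • g)) ξf
    simpa using this
  rw [← hmax, Real.dist_eq]
  have heq : ((⨆ ξ, (f + t • g) ξ) - f ξf) / t - g ξf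
      = ((⨆ ξ, (f + t • g) ξ) - f ξf - t * g ξf) / t := by
    field_simp
  rw [heq, abs_div]
  rw [div_lt_iff₀ htabs]
  have hnum : |(⨆ ξ, (f + t • g) ξ) - f ξf - t * g ξf| ≤ |t| * (ε / 2) := by
    rw [abs_le]
    constructor
    · have h5 : 0 ≤ |t| * (ε / 2) := by positivity
      linarith
    · linarith
  have : |t| * (ε / 2) < ε * |t| := by
    rw [mul_comm ε |t|]
    exact mul_lt_mul_of_pos_left (by linarith) htabs
  linarith
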